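/- (Key recursion (26), proof of Theorem 1) Suppose the nonnegative tolerance sequence {η_k} is summable, and assume that for every λ ∈ ℝᵐ the AL subproblem min_x L_β(x;λ) has an exact solution. Then for every k ≥ 1: δ_{k+1} ≤ δ_k − θδ_k² + (3/2)η_k, where δ_k := d(λ*) − d(λ^k), B := √(‖λ¹ − λ*‖² + 2β Σ_{k=1}^∞ η_k), and θ := β/(4B²). -/

import Mathlib

open RealInnerProductSpace Filter

lemma convex_grad_ineq {E : Type*} [NormedAddCommGroup E] [InnerProductSpace ℝ E]
    [CompleteSpace E]
    {f : E → ℝ} (hf : ConvexOn ℝ Set.univ f) {p q : E} {gp : E}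
    (h : HasGradientAt f gp p) : f p + ⟪gp, q - p⟫ ≤ f q := by
  have hφconv : ConvexOn ℝ Set.univ (fun t : ℝ => f (p + t • (q - p))) := by
    have := hf.comp_affineMap (AffineMap.lineMap p q : ℝ →ᵃ[ℝ] E)
    have heq : (f ∘ (AffineMap.lineMap p q : ℝ →ᵃ[ℝ] E)) = fun t : ℝ => f (p + t • (q - p)) := by
      funext t; simp [AffineMap.lineMap_apply, add_comm]
    rw [heq] at this
    simpa using this
  have hc : HasDerivAt (fun t : ℝ => p + t • (q - p)) (q - p) 0 := by
    simpa using ((hasDerivAt_id (0:ℝ)).smul_const (q - p)).const_add p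
  have hF : HasFDerivAt f (InnerProductSpace.toDual ℝ E gp) p := by
    rwa [← hasGradientAt_iff_hasFDerivAt]
  have hφ : HasDerivAt (fun t : ℝ => f (p + t • (q - p))) ⟪gp, q - p⟫ 0 := by
    have hF2 : HasFDerivAt f (InnerProductSpace.toDual ℝ E gp)
        ((fun t : ℝ => p + t • (q - p)) 0) := by simpa using hF
    have := hF2.comp_hasDerivAt (x := (0:ℝ)) hc
    simpa [InnerProductSpace.toDual_apply_apply, Function.comp_def] using this
  have := hφconv.le_slope_of_hasDerivAt (Set.mem_univ 0) (Set.mem_univ 1) one_pos hφ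
  rw [slope_def_field] at this
  simp only [zero_smul, add_zero, one_smul] at this
  have h1 : p + (q - p) = q := by abel
  rw [h1] at this
  have : ⟪gp, q - p⟫ ≤ f q - f p := by
    simpa [div_one] using this
  linarith

set_option maxHeartbeats 2000000 in
/-- **Key recursion (26) (proof of Theorem 1).**
Suppose the nonnegative tolerance sequence `{η_k}` is summable and every AL subproblem
has an exact solution. Then for every `k ≥ 1`: `δ_{k+1} ≤ δ_k − θδ_k² + (3/2)η_k`. -/
theorem ial_key_recursion
    {n m : ℕ}
    (A : EuclideanSpace ℝ (Fin n) →L[ℝ] EuclideanSpace ℝ (Fin m))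
    (b : EuclideanSpace ℝ (Fin m))
    (f g : EuclideanSpace ℝ (Fin n) → ℝ)
    (f' : EuclideanSpace ℝ (Fin n) → EuclideanSpace ℝ (Fin n))
    (hf : ConvexOn ℝ Set.univ f)
    (hf' : ∀ x, HasGradientAt f (f' x) x)
    (hg : ConvexOn ℝ Set.univ g)
    (β : ℝ) (hβ : 0 < β)
    (L : EuclideanSpace ℝ (Fin n) → EuclideanSpace ℝ (Fin m) → ℝ)
    (hL : ∀ x lam, L x lam
        = f x + ⟪lam, A x - b⟫ + β / 2 * ‖A x - b‖ ^ 2 + g x)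
    (d : EuclideanSpace ℝ (Fin m) → ℝ)
    (hd : ∀ lam, IsLeast (Set.range fun x => L x lam) (d lam))
    (x : ℕ → EuclideanSpace ℝ (Fin n))
    (lam : ℕ → EuclideanSpace ℝ (Fin m))
    (η : ℕ → ℝ)
    (hη : ∀ k, 1 ≤ k → 0 ≤ η k)
    (hsum : Summable fun k : ℕ => η (k + 1))
    (hexact : ∀ lam₀ : EuclideanSpace ℝ (Fin m), ∃ xbar, ∀ y,
        ⟪f' xbar + A.adjoint (lam₀ + β • (A xbar - b)), xbar - y⟫ + g xbar - g y ≤ 0)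
    (happrox : ∀ k, 1 ≤ k → ∀ y,
        ⟪f' (x (k + 1)) + A.adjoint (lam k + β • (A (x (k + 1)) - b)), x (k + 1) - y⟫
          + g (x (k + 1)) - g y ≤ η k)
    (hlam : ∀ k, 1 ≤ k → lam (k + 1) = lam k + β • (A (x (k + 1)) - b))
    (lamstar : EuclideanSpace ℝ (Fin m))
    (hstar : ∀ μ, d μ ≤ d lamstar)
    (δ : ℕ → ℝ)
    (hδ : ∀ k, δ k = d lamstar - d (lam k))
    (B : ℝ)
    (hB : B = Real.sqrt (‖lam 1 - lamstar‖ ^ 2 + 2 * β * ∑' k : ℕ, η (k + 1)))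
    (θ : ℝ)
    (hθ : θ = β / (4 * B ^ 2))
    :
    ∀ k, 1 ≤ k → δ (k + 1) ≤ δ k - θ * δ k ^ 2 + 3 / 2 * η k := by
  classical
  -- Key variational inequality consequence for the AL subproblem
  have key : ∀ (lam₀ : EuclideanSpace ℝ (Fin m)) (xp : EuclideanSpace ℝ (Fin n)) (ηv : ℝ),
      (∀ y, ⟪f' xp + A.adjoint (lam₀ + β • (A xp - b)), xp - y⟫ + g xp - g y ≤ ηv) →
      ∀ y, L xp lam₀ + β / 2 * ‖A xp - A y‖ ^ 2 ≤ L y lam₀ + ηv := by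
    intro lam₀ xp ηv hVI y
    have hgrad : f xp - f y ≤ ⟪f' xp, xp - y⟫ := by
      have h1 := convex_grad_ineq hf (q := y) (hf' xp)
      have h2 : ⟪f' xp, y - xp⟫ = -⟪f' xp, xp - y⟫ := by
        rw [← inner_neg_right]; congr 1; abel
      linarith
    have hAw : A (xp - y) = (A xp - b) - (A y - b) := by
      rw [map_sub]; abel
    have h3 : ⟪A.adjoint lam₀, xp - y⟫ = ⟪lam₀, A xp - b⟫ - ⟪lam₀, A y - b⟫ := by
      rw [ContinuousLinearMap.adjoint_inner_left, hAw, inner_sub_right]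
    have h4 : ⟪A.adjoint (β • (A xp - b)), xp - y⟫
        = β * ‖A xp - b‖ ^ 2 - β * ⟪A xp - b, A y - b⟫ := by
      rw [ContinuousLinearMap.adjoint_inner_left, hAw, inner_sub_right,
        real_inner_smul_left, real_inner_smul_left, real_inner_self_eq_norm_sq]
    have hAxy : ‖A xp - A y‖ ^ 2
        = ‖A xp - b‖ ^ 2 - 2 * ⟪A xp - b, A y - b⟫ + ‖A y - b‖ ^ 2 := by
      have h : A xp - A y = (A xp - b) - (A y - b) := by abel
      rw [h, norm_sub_sq_real]
    have hVIy := hVI y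
    rw [map_add, inner_add_left, inner_add_left] at hVIy
    rw [hL xp lam₀, hL y lam₀, hAxy]
    linarith
  -- shift identity for L in the dual variable
  have hshift : ∀ (xx : EuclideanSpace ℝ (Fin n)) (μ₁ μ₂ : EuclideanSpace ℝ (Fin m)),
      L xx μ₁ - L xx μ₂ = ⟪μ₁ - μ₂, A xx - b⟫ := by
    intro xx μ₁ μ₂
    rw [hL, hL, inner_sub_left]; ring
  -- core estimates per iteration
  have core : ∀ k, 1 ≤ k → L (x (k+1)) (lam k) ≤ d (lam k) + η k ∧
      L (x (k+1)) (lam k) + β / 2 * ‖A (x (k+1)) - b‖ ^ 2 - η k ≤ d (lam (k+1)) := by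
    intro k hk
    have KEY := key (lam k) (x (k+1)) (η k) (happrox k hk)
    constructor
    · obtain ⟨xb, hxb⟩ := (hd (lam k)).1
      have hn : (0:ℝ) ≤ β / 2 * ‖A (x (k+1)) - A xb‖ ^ 2 := by positivity
      have := KEY xb
      simp only at hxb
      linarith
    · obtain ⟨xb, hxb⟩ := (hd (lam (k+1))).1
      simp only at hxb
      have hK := KEY xb
      have hd1 : lam (k+1) - lam k = β • (A (x (k+1)) - b) := by
        rw [hlam k hk]; abel
      have hs : L xb (lam (k+1)) - L xb (lam k)
          = β * ⟪A (x (k+1)) - b, A xb - b⟫ := by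
        rw [hshift xb (lam (k+1)) (lam k), hd1, real_inner_smul_left]
      have hexp : ‖A (x (k+1)) - A xb‖ ^ 2
          = ‖A (x (k+1)) - b‖ ^ 2 - 2 * ⟪A (x (k+1)) - b, A xb - b⟫ + ‖A xb - b‖ ^ 2 := by
        have h : A (x (k+1)) - A xb = (A (x (k+1)) - b) - (A xb - b) := by abel
        rw [h, norm_sub_sq_real]
      have hV : (0:ℝ) ≤ β / 2 * ‖A xb - b‖ ^ 2 := by positivity
      rw [hexp] at hK
      linarith
  -- S1 : dual improvement
  have S1 : ∀ k, 1 ≤ k →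
      d (lam k) + β / 2 * ‖A (x (k+1)) - b‖ ^ 2 - η k ≤ d (lam (k+1)) := by
    intro k hk
    have hlow : d (lam k) ≤ L (x (k+1)) (lam k) := (hd (lam k)).2 ⟨x (k+1), rfl⟩
    have := (core k hk).2
    linarith
  -- S2 : approximate concavity inequality
  have S2 : ∀ k, 1 ≤ k → ∀ μ, d μ ≤ d (lam k) + η k + ⟪μ - lam k, A (x (k+1)) - b⟫ := by
    intro k hk μ
    have h1 : d μ ≤ L (x (k+1)) μ := (hd μ).2 ⟨x (k+1), rfl⟩
    have h2 := hshift (x (k+1)) μ (lam k)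
    have h3 := (core k hk).1
    linarith
  -- S3 : quasi-Fejér monotonicity of the multipliers
  have S3 : ∀ k, 1 ≤ k →
      ‖lam (k+1) - lamstar‖ ^ 2 ≤ ‖lam k - lamstar‖ ^ 2 + 2 * β * η k := by
    intro k hk
    -- lower bound on the inner product
    have h1 : d lamstar ≤ L (x (k+1)) lamstar := (hd lamstar).2 ⟨x (k+1), rfl⟩
    have h2 := hshift (x (k+1)) lamstar (lam k)
    have h3 := (core k hk).2
    have h4 := hstar (lam (k+1))
    have hip : β / 2 * ‖A (x (k+1)) - b‖ ^ 2 - η k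
        ≤ ⟪lamstar - lam k, A (x (k+1)) - b⟫ := by linarith
    have hnorm : ‖lam (k+1) - lamstar‖ ^ 2
        = ‖lam k - lamstar‖ ^ 2 + 2 * (β * ⟪lam k - lamstar, A (x (k+1)) - b⟫)
          + β ^ 2 * ‖A (x (k+1)) - b‖ ^ 2 := by
      have h : lam (k+1) - lamstar = (lam k - lamstar) + β • (A (x (k+1)) - b) := by
        rw [hlam k hk]; abel
      rw [h, norm_add_sq_real, real_inner_smul_right, norm_smul, Real.norm_eq_abs]
      rw [mul_pow, sq_abs]
    have hsym : ⟪lam k - lamstar, A (x (k+1)) - b⟫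
        = -⟪lamstar - lam k, A (x (k+1)) - b⟫ := by
      rw [← inner_neg_left]; congr 1; abel
    have hm := mul_le_mul_of_nonneg_left hip (by linarith : (0:ℝ) ≤ 2 * β)
    rw [hnorm, hsym]
    linarith [hm]
  -- bound on B² and the multipliers
  have hT0 : (0:ℝ) ≤ ∑' k : ℕ, η (k+1) :=
    tsum_nonneg (fun j => hη (j+1) (Nat.le_add_left 1 j))
  have hB2 : B ^ 2 = ‖lam 1 - lamstar‖ ^ 2 + 2 * β * ∑' k : ℕ, η (k+1) := by
    rw [hB, Real.sq_sqrt]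
    have h1 : (0:ℝ) ≤ 2 * β * ∑' k : ℕ, η (k+1) := by
      apply mul_nonneg (by linarith) hT0
    positivity
  have hBnn : 0 ≤ B := hB ▸ Real.sqrt_nonneg _
  have Ebound : ∀ k, 1 ≤ k → ‖lam k - lamstar‖ ^ 2 ≤ B ^ 2 := by
    have main : ∀ j : ℕ, ‖lam (j+1) - lamstar‖ ^ 2
        ≤ ‖lam 1 - lamstar‖ ^ 2 + 2 * β * ∑ i ∈ Finset.range j, η (i+1) := by
      intro j
      induction j with
      | zero => simp
      | succ j ih =>
        have h := S3 (j+1) (Nat.le_add_left 1 j)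
        rw [Finset.sum_range_succ]
        linarith [h, ih]
    intro k hk
    obtain ⟨j, rfl⟩ := Nat.exists_eq_add_of_le hk
    have h1 := main j
    have h2 : 1 + j = j + 1 := Nat.add_comm 1 j
    rw [h2]
    have hsum_le : ∑ i ∈ Finset.range j, η (i+1) ≤ ∑' i : ℕ, η (i+1) :=
      Summable.sum_le_tsum _ (fun i _ => hη (i+1) (Nat.le_add_left 1 i)) hsum
    have hmul := mul_le_mul_of_nonneg_left hsum_le (by linarith : (0:ℝ) ≤ 2 * β)
    rw [hB2]
    linarith
  have Enorm : ∀ k, 1 ≤ k → ‖lam k - lamstar‖ ≤ B := by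
    intro k hk
    calc ‖lam k - lamstar‖ = Real.sqrt (‖lam k - lamstar‖ ^ 2) :=
          (Real.sqrt_sq (norm_nonneg _)).symm
      _ ≤ Real.sqrt (B ^ 2) := Real.sqrt_le_sqrt (Ebound k hk)
      _ = B := Real.sqrt_sq hBnn
  -- final assembly
  intro k hk
  have hηnn := hη k hk
  have hδknn : 0 ≤ δ k := by rw [hδ k]; linarith [hstar (lam k)]
  have F1 : δ (k+1) ≤ δ k - β / 2 * ‖A (x (k+1)) - b‖ ^ 2 + η k := by
    have := S1 k hk
    rw [hδ k, hδ (k+1)]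
    linarith
  have F2 : δ k ≤ B * ‖A (x (k+1)) - b‖ + η k := by
    have h2 := S2 k hk lamstar
    have hcs : ⟪lamstar - lam k, A (x (k+1)) - b⟫
        ≤ ‖lamstar - lam k‖ * ‖A (x (k+1)) - b‖ := real_inner_le_norm _ _
    have hnb : ‖lamstar - lam k‖ ≤ B := by rw [norm_sub_rev]; exact Enorm k hk
    have hmul := mul_le_mul_of_nonneg_right hnb (norm_nonneg (A (x (k+1)) - b))
    rw [hδ k]
    linarith
  have F3 : 2 * β * η k ≤ B ^ 2 := by
    have hle : η k ≤ ∑' i : ℕ, η (i+1) := by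
      have h := Summable.le_tsum hsum (k-1) (fun j _ => hη (j+1) (Nat.le_add_left 1 j))
      rwa [Nat.sub_add_cancel hk] at h
    have hmul := mul_le_mul_of_nonneg_left hle (by linarith : (0:ℝ) ≤ 2 * β)
    rw [hB2]
    linarith [sq_nonneg ‖lam 1 - lamstar‖]
  by_cases hB0 : B = 0
  · have hθ0 : θ = 0 := by rw [hθ, hB0]; norm_num
    have hη0 : η k = 0 := by
      have h2β : (0:ℝ) < 2 * β := by linarith
      have h' : 2 * β * η k ≤ 2 * β * 0 := by
        rw [hB0] at F3; simpa using F3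
      have := (mul_le_mul_iff_right₀ h2β).mp h'
      linarith
    have hδ0 : δ k = 0 := by
      rw [hB0, hη0] at F2
      simp only [zero_mul, add_zero] at F2
      linarith
    have hq : (0:ℝ) ≤ β / 2 * ‖A (x (k+1)) - b‖ ^ 2 := by positivity
    have hneg : δ (k+1) ≤ 0 := by linarith [F1, hδ0, hη0, hq]
    rw [hθ0, hδ0, hη0]
    norm_num
    linarith
  · have hBpos : 0 < B := lt_of_le_of_ne hBnn (Ne.symm hB0)
    have hC : 0 < B ^ 2 := by positivity
    have hsq : δ k ^ 2 ≤ 2 * B ^ 2 * ‖A (x (k+1)) - b‖ ^ 2 + 2 * η k ^ 2 := by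
      nlinarith [F2, hδknn, sq_nonneg (B * ‖A (x (k+1)) - b‖ - η k),
        mul_nonneg hBnn (norm_nonneg (A (x (k+1)) - b))]
    have hkey : θ * δ k ^ 2 ≤ β / 2 * ‖A (x (k+1)) - b‖ ^ 2 + η k / 2 := by
      rw [hθ, div_mul_eq_mul_div, div_le_iff₀ (by positivity : (0:ℝ) < 4 * B ^ 2)]
      nlinarith [mul_le_mul_of_nonneg_left hsq hβ.le,
        mul_le_mul_of_nonneg_right F3 hηnn,
        mul_nonneg (le_of_lt hC) hηnn]
    linarith [F1, hkey]
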